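/- arXiv:hep-th/0602102 — 5 statements merged into one kernel-verified Lean document; each statement's English description precedes it below -/
import Mathlib

section
/- For integers m, n > 1 with m + n ≥ 10, the eigenvalues λ₁ > λ₂ > 0 of the matrix (1/(m+n))·[[0,1],[−2(m+n−1), m+n−1]] satisfy λ₁ ≥ 2λ₂. -/
open Matrix

/-- For `m + n ≥ 10`, the eigenvalues `λ₁ > λ₂ > 0` of the linearization at the
Friedmann fixed point satisfy `λ₁ ≥ 2 λ₂`. -/
theorem friedmann_eigenvalue_ratio (m n : ℕ) (hm : 1 < m) (hn : 1 < n)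
    (hd : 10 ≤ m + n) :
    let N : ℝ := (m : ℝ) + n
    let s : ℝ := Real.sqrt ((N - 1) * (N - 9))
    let l₁ : ℝ := ((N - 1) + s) / (2 * N)
    let l₂ : ℝ := ((N - 1) - s) / (2 * N)
    let M : Matrix (Fin 2) (Fin 2) ℝ := N⁻¹ • !![0, 1; -2 * (N - 1), N - 1]
    (l₁ • (1 : Matrix (Fin 2) (Fin 2) ℝ) - M).det = 0 ∧
    (l₂ • (1 : Matrix (Fin 2) (Fin 2) ℝ) - M).det = 0 ∧
    0 < l₂ ∧ l₂ < l₁ ∧ l₁ ≥ 2 * l₂ := by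
  intro N s l₁ l₂ M
  have hN : (10 : ℝ) ≤ N := by
    have : (10 : ℝ) ≤ ((m + n : ℕ) : ℝ) := by exact_mod_cast hd
    simpa [N] using this
  have hnn : 0 ≤ (N - 1) * (N - 9) := by nlinarith
  have hs2 : s ^ 2 = (N - 1) * (N - 9) := Real.sq_sqrt hnn
  have hs0 : 0 ≤ s := Real.sqrt_nonneg _
  have hl1 : l₁ = ((N - 1) + s) / (2 * N) := rfl
  have hl2 : l₂ = ((N - 1) - s) / (2 * N) := rfl
  have hM : M = N⁻¹ • !![0, 1; -2 * (N - 1), N - 1] := rfl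
  clear_value M l₂ l₁ s N
  clear hd hm hn
  have hN0 : N ≠ 0 := by positivity
  have hspos : 0 < s := by nlinarith
  have hslt : s < N - 1 := by nlinarith
  have hdet : ∀ l : ℝ, (l • (1 : Matrix (Fin 2) (Fin 2) ℝ) - M).det
      = l ^ 2 - (N - 1) / N * l + 2 * (N - 1) / N ^ 2 := by
    intro l
    rw [hM]
    simp [Matrix.det_fin_two, Matrix.smul_apply, Matrix.one_apply]
    field_simp
  have h2N : (0:ℝ) < 2 * N := by nlinarith
  have h3s : N - 1 ≤ 3 * s := by nlinarith [hs2, hspos, hN]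
  refine ⟨?_, ?_, ?_, ?_, ?_⟩
  · rw [hdet, hl1]; field_simp; linear_combination hs2
  · rw [hdet, hl2]; field_simp; linear_combination hs2
  · rw [hl2]; exact div_pos (by nlinarith) h2N
  · rw [hl1, hl2]
    exact div_lt_div_of_pos_right (by nlinarith) h2N
  · rw [ge_iff_le, hl1, hl2, ← mul_div_assoc, div_le_div_iff₀ h2N h2N]
    nlinarith
end

section
/- Let m, n > 1 be integers and define Z = A^m B^n on the state space {mP + nQ = 1, mP² + nQ² + (m+n−1)(mA² + nB²) = 1, A > 0, B > 0}. Along the flow A' = A[P − (mP² + nQ²)], B' = B[Q − (mP² + nQ²)], one has Z' = Z[1 − (m+n)(mP² + nQ²)], and Z' ≤ 0 on the state space, with Z' = 0 if and only if P = Q = 1/(m+n). -/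
/-- Along the flow of the scale-invariant system, `Z = A^m B^n` satisfies
`Z' = Z [1 - (m+n)(mP² + nQ²)]`, which is nonpositive on the state space, vanishing
iff `P = Q = 1/(m+n)`. -/
theorem Z_monotone (m n : ℕ) (hm : 1 < m) (hn : 1 < n)
    (A B P Q : ℝ → ℝ)
    (hA : ∀ τ, HasDerivAt A (A τ * (P τ - ((m : ℝ) * (P τ) ^ 2 + n * (Q τ) ^ 2))) τ)
    (hB : ∀ τ, HasDerivAt B (B τ * (Q τ - ((m : ℝ) * (P τ) ^ 2 + n * (Q τ) ^ 2))) τ)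
    (htrace : ∀ τ, (m : ℝ) * P τ + n * Q τ = 1)
    (hham : ∀ τ, (m : ℝ) * (P τ) ^ 2 + n * (Q τ) ^ 2
      + ((m : ℝ) + n - 1) * ((m : ℝ) * (A τ) ^ 2 + n * (B τ) ^ 2) = 1)
    (hApos : ∀ τ, 0 < A τ) (hBpos : ∀ τ, 0 < B τ) :
    ∀ τ, HasDerivAt (fun t => A t ^ m * B t ^ n)
        ((A τ ^ m * B τ ^ n) * (1 - ((m : ℝ) + n) * ((m : ℝ) * (P τ) ^ 2 + n * (Q τ) ^ 2))) τ ∧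
      (A τ ^ m * B τ ^ n) * (1 - ((m : ℝ) + n) * ((m : ℝ) * (P τ) ^ 2 + n * (Q τ) ^ 2)) ≤ 0 ∧
      ((A τ ^ m * B τ ^ n) * (1 - ((m : ℝ) + n) * ((m : ℝ) * (P τ) ^ 2 + n * (Q τ) ^ 2)) = 0 ↔
        P τ = 1 / ((m : ℝ) + n) ∧ Q τ = 1 / ((m : ℝ) + n)) := by
  intro τ
  have hm0 : (0:ℝ) < m := by positivity
  have hn0 : (0:ℝ) < n := by positivity
  have hmn0 : (0:ℝ) < (m:ℝ) + n := by linarith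
  have htr := htrace τ
  -- key algebraic identity: 1 - (m+n)(mP²+nQ²) = -mn(P-Q)²
  have hkey : 1 - ((m : ℝ) + n) * ((m : ℝ) * (P τ) ^ 2 + n * (Q τ) ^ 2)
      = -((m:ℝ) * n * (P τ - Q τ)^2) := by
    have h1 : (1:ℝ) = ((m:ℝ) * P τ + n * Q τ)^2 := by rw [htr]; ring
    rw [h1]; ring
  have hAτ := hApos τ
  have hBτ := hBpos τ
  have hZpos : 0 < A τ ^ m * B τ ^ n := by positivity
  constructor
  · -- derivative
    have hAm : HasDerivAt (fun t => A t ^ m)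
        ((m:ℕ) * A τ ^ (m - 1) * (A τ * (P τ - ((m : ℝ) * (P τ) ^ 2 + n * (Q τ) ^ 2)))) τ :=
      (hA τ).pow m
    have hBn : HasDerivAt (fun t => B t ^ n)
        ((n:ℕ) * B τ ^ (n - 1) * (B τ * (Q τ - ((m : ℝ) * (P τ) ^ 2 + n * (Q τ) ^ 2)))) τ :=
      (hB τ).pow n
    have := hAm.mul hBn
    convert this using 1
    case e'_4 => rfl
    case e'_5 => rfl
    case e'_8 => rfl
    have hA1 : A τ ^ (m - 1) * A τ = A τ ^ m := by
      rw [← pow_succ, Nat.sub_add_cancel hm.le]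
    have hB1 : B τ ^ (n - 1) * B τ = B τ ^ n := by
      rw [← pow_succ, Nat.sub_add_cancel hn.le]
    have expand : (m:ℝ) * A τ ^ (m - 1) * (A τ * (P τ - ((m : ℝ) * (P τ) ^ 2 + n * (Q τ) ^ 2))) * B τ ^ n
        + A τ ^ m * ((n:ℝ) * B τ ^ (n - 1) * (B τ * (Q τ - ((m : ℝ) * (P τ) ^ 2 + n * (Q τ) ^ 2))))
        = A τ ^ m * B τ ^ n * ((m:ℝ) * P τ + n * Q τ - ((m:ℝ)+n) * ((m : ℝ) * (P τ) ^ 2 + n * (Q τ) ^ 2)) := by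
      rw [← hA1, ← hB1]; ring
    rw [expand, htr]
  constructor
  · rw [hkey]
    have : (0:ℝ) ≤ (m:ℝ) * n * (P τ - Q τ)^2 := by positivity
    nlinarith
  · rw [hkey]
    constructor
    · intro h
      have h0 : (m:ℝ) * n * (P τ - Q τ)^2 = 0 := by
        rcases mul_eq_zero.mp h with h' | h'
        · linarith
        · linarith [neg_eq_zero.mp h']
      have hPQ : P τ = Q τ := by
        have : (P τ - Q τ)^2 = 0 := by
          have := mul_pos hm0 hn0
          nlinarith
        have := pow_eq_zero_iff (n := 2) (by norm_num) |>.mp this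
        linarith
      constructor
      · field_simp
        nlinarith
      · field_simp
        nlinarith
    · rintro ⟨hP, hQ⟩
      rw [hP, hQ]
      simp
end

section
/- Let m, n > 1 be integers. On the set {mP + nQ = 1, mP² + nQ² + (m+n−1)(mA² + nB²) = 1, A ≥ 0, B ≥ 0}, the function Z = A^m B^n attains its maximum precisely at the point A = B = P = Q = 1/(m+n). -/
private lemma my_geom_lt (x y w1 w2 : ℝ) (hx : 0 < x) (hy : 0 < y) (hxy : x ≠ y)
    (hw1 : 0 < w1) (hw2 : 0 < w2) (hw : w1 + w2 = 1) :
    x ^ w1 * y ^ w2 < w1 * x + w2 * y := by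
  have hlog := strictConcaveOn_log_Ioi.2 (Set.mem_Ioi.2 hx) (Set.mem_Ioi.2 hy) hxy hw1 hw2 hw
  have hpos : 0 < w1 * x + w2 * y := by positivity
  have hrw : x ^ w1 * y ^ w2 = Real.exp (w1 * Real.log x + w2 * Real.log y) := by
    rw [Real.exp_add, Real.rpow_def_of_pos hx, Real.rpow_def_of_pos hy, mul_comm w1,
      mul_comm w2]
  rw [hrw, ← Real.exp_log hpos]
  exact Real.exp_lt_exp.2 (by simpa [smul_eq_mul] using hlog)

private lemma amgm_base (m n : ℕ) (hm : 0 < m) (hn : 0 < n) (x y : ℝ)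
    (hx : 0 ≤ x) (hy : 0 ≤ y) :
    (x ^ ((m : ℝ) / ((m : ℝ) + n)) * y ^ ((n : ℝ) / ((m : ℝ) + n))) ^ (m + n)
      = x ^ m * y ^ n := by
  have hm' : (0:ℝ) < m := by exact_mod_cast hm
  have hn' : (0:ℝ) < n := by exact_mod_cast hn
  have ht : ((m : ℝ) + n) ≠ 0 := by positivity
  rw [mul_pow, ← Real.rpow_natCast (x ^ ((m : ℝ) / ((m : ℝ) + n))) (m + n),
    ← Real.rpow_natCast (y ^ ((n : ℝ) / ((m : ℝ) + n))) (m + n),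
    ← Real.rpow_mul hx, ← Real.rpow_mul hy,
    show (m : ℝ) / ((m : ℝ) + n) * ((m + n : ℕ) : ℝ) = (m : ℝ) by push_cast; field_simp,
    show (n : ℝ) / ((m : ℝ) + n) * ((m + n : ℕ) : ℝ) = (n : ℝ) by push_cast; field_simp,
    Real.rpow_natCast, Real.rpow_natCast]

private lemma amgm_le (m n : ℕ) (hm : 0 < m) (hn : 0 < n) (x y : ℝ)
    (hx : 0 ≤ x) (hy : 0 ≤ y) :
    x ^ m * y ^ n ≤ (((m : ℝ) * x + (n : ℝ) * y) / ((m : ℝ) + n)) ^ (m + n) := by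
  have hm' : (0:ℝ) < m := by exact_mod_cast hm
  have hn' : (0:ℝ) < n := by exact_mod_cast hn
  have ht : (0:ℝ) < (m : ℝ) + n := by positivity
  have key := Real.geom_mean_le_arith_mean2_weighted
    (le_of_lt (div_pos hm' ht)) (le_of_lt (div_pos hn' ht)) hx hy
    (by field_simp)
  have h2 := pow_le_pow_left₀ (by positivity) key (m + n)
  rw [amgm_base m n hm hn x y hx hy] at h2
  calc x ^ m * y ^ n ≤ ((m : ℝ) / ((m:ℝ)+n) * x + (n : ℝ) / ((m:ℝ)+n) * y) ^ (m+n) := h2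
    _ = (((m : ℝ) * x + (n : ℝ) * y) / ((m : ℝ) + n)) ^ (m + n) := by
        congr 1; field_simp; try ring

private lemma amgm_lt (m n : ℕ) (hm : 0 < m) (hn : 0 < n) (x y : ℝ)
    (hx : 0 < x) (hy : 0 < y) (hxy : x ≠ y) :
    x ^ m * y ^ n < (((m : ℝ) * x + (n : ℝ) * y) / ((m : ℝ) + n)) ^ (m + n) := by
  have hm' : (0:ℝ) < m := by exact_mod_cast hm
  have hn' : (0:ℝ) < n := by exact_mod_cast hn
  have ht : (0:ℝ) < (m : ℝ) + n := by positivity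
  have key := my_geom_lt x y ((m:ℝ)/((m:ℝ)+n)) ((n:ℝ)/((m:ℝ)+n)) hx hy hxy
    (div_pos hm' ht) (div_pos hn' ht) (by field_simp)
  have h2 := pow_lt_pow_left₀ key (by positivity) (Nat.add_pos_left hm n).ne'
  rw [amgm_base m n hm hn x y hx.le hy.le] at h2
  calc x ^ m * y ^ n < ((m : ℝ) / ((m:ℝ)+n) * x + (n : ℝ) / ((m:ℝ)+n) * y) ^ (m+n) := h2
    _ = (((m : ℝ) * x + (n : ℝ) * y) / ((m : ℝ) + n)) ^ (m + n) := by
        congr 1; field_simp; try ring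

set_option maxHeartbeats 2000000 in
/-- On the closed constraint set, `Z = A^m B^n` attains its maximum precisely at the
Friedmann point `A = B = P = Q = 1/(m+n)`. -/
theorem Z_max_at_friedmann (m n : ℕ) (hm : 1 < m) (hn : 1 < n)
    (A B P Q : ℝ)
    (htrace : (m : ℝ) * P + n * Q = 1)
    (hham : (m : ℝ) * P ^ 2 + n * Q ^ 2
      + ((m : ℝ) + n - 1) * ((m : ℝ) * A ^ 2 + n * B ^ 2) = 1)
    (hA : 0 ≤ A) (hB : 0 ≤ B) :
    A ^ m * B ^ n ≤ (1 / ((m : ℝ) + n)) ^ m * (1 / ((m : ℝ) + n)) ^ n ∧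
    (A ^ m * B ^ n = (1 / ((m : ℝ) + n)) ^ m * (1 / ((m : ℝ) + n)) ^ n ↔
      A = 1 / ((m : ℝ) + n) ∧ B = 1 / ((m : ℝ) + n) ∧
      P = 1 / ((m : ℝ) + n) ∧ Q = 1 / ((m : ℝ) + n)) := by
  have hm0 : 0 < m := by omega
  have hn0 : 0 < n := by omega
  have hm' : (2:ℝ) ≤ m := by exact_mod_cast hm
  have hn' : (2:ℝ) ≤ n := by exact_mod_cast hn
  set t : ℝ := (m : ℝ) + n with ht_def
  have ht : (0:ℝ) < t := by rw [ht_def]; linarith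
  have ht1 : (1:ℝ) < t := by rw [ht_def]; linarith
  have hk0 : m + n ≠ 0 := by omega
  -- energy identities
  have e1 : t * ((m:ℝ) * P ^ 2 + n * Q ^ 2) = 1 + (m:ℝ) * n * (P - Q) ^ 2 := by
    rw [ht_def]; linear_combination ((m:ℝ) * P + n * Q + 1) * htrace
  have e2 : t * (t - 1) * ((m:ℝ) * A ^ 2 + n * B ^ 2)
      = (t - 1) - (m:ℝ) * n * (P - Q) ^ 2 := by
    rw [ht_def] at e1 ⊢; linear_combination ((m:ℝ)+n) * hham - e1
  have hS0 : (0:ℝ) ≤ (m:ℝ) * A ^ 2 + n * B ^ 2 := by positivity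
  have hmnd : (0:ℝ) ≤ (m:ℝ) * n * (P - Q) ^ 2 := by positivity
  have hSle : (m:ℝ) * A ^ 2 + n * B ^ 2 ≤ 1 / t := by
    rw [le_div_iff₀ ht]
    nlinarith [e2, hmnd, sub_pos.2 ht1, hS0]
  -- squared quantities
  have hZsq : (A ^ m * B ^ n) ^ 2 = (A ^ 2) ^ m * (B ^ 2) ^ n := by
    rw [mul_pow, pow_right_comm A m 2, pow_right_comm B n 2]
  have hcsq : ((1 / t) ^ m * (1 / t) ^ n) ^ 2 = ((1 / t) / t) ^ (m + n) := by
    rw [show (1 / t) / t = (1 / t) * (1 / t) by field_simp,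
      ← pow_add, mul_pow, ← pow_mul, mul_two, pow_add]
  have hamle := amgm_le m n hm0 hn0 (A ^ 2) (B ^ 2) (sq_nonneg A) (sq_nonneg B)
  have hbase : ((m:ℝ) * A ^ 2 + (n:ℝ) * B ^ 2) / t ≤ (1 / t) / t := by gcongr
  have hmono : (((m:ℝ) * A ^ 2 + (n:ℝ) * B ^ 2) / t) ^ (m + n)
      ≤ ((1 / t) / t) ^ (m + n) := pow_le_pow_left₀ (by positivity) hbase _
  have hZ2 : (A ^ m * B ^ n) ^ 2 ≤ ((1 / t) ^ m * (1 / t) ^ n) ^ 2 := by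
    rw [hZsq, hcsq]; exact hamle.trans hmono
  have hc0 : (0:ℝ) < (1 / t) ^ m * (1 / t) ^ n := by positivity
  have hZ0 : (0:ℝ) ≤ A ^ m * B ^ n := by positivity
  have hmain : A ^ m * B ^ n ≤ (1 / t) ^ m * (1 / t) ^ n := by nlinarith [hZ2, hZ0, hc0]
  refine ⟨hmain, ?_, ?_⟩
  · -- equality implies Friedmann point
    intro heq
    have hApos : 0 < A := by
      rcases hA.eq_or_lt with h | h
      · exfalso; rw [← h, zero_pow hm0.ne', zero_mul] at heq; linarith [hc0, heq.symm.le]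
      · exact h
    have hBpos : 0 < B := by
      rcases hB.eq_or_lt with h | h
      · exfalso; rw [← h, zero_pow hn0.ne', mul_zero] at heq; linarith [hc0, heq.symm.le]
      · exact h
    have hAB : A = B := by
      by_contra hne
      have hXY : A ^ 2 ≠ B ^ 2 := by
        intro hc
        rcases sq_eq_sq_iff_eq_or_eq_neg.mp hc with h | h
        · exact hne h
        · rw [h] at hApos; linarith
      have hlt := amgm_lt m n hm0 hn0 (A ^ 2) (B ^ 2) (by positivity) (by positivity) hXY
      have : (A ^ m * B ^ n) ^ 2 < ((1 / t) ^ m * (1 / t) ^ n) ^ 2 := by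
        rw [hZsq, hcsq]; exact hlt.trans_le hmono
      rw [heq] at this; linarith
    have hPQ : P = Q := by
      by_contra hne
      have hd : 0 < (P - Q) ^ 2 := by
        have h0 : P - Q ≠ 0 := sub_ne_zero.2 hne
        positivity
      have hmnd' : (0:ℝ) < (m:ℝ) * n * (P - Q) ^ 2 := by
        have hmn : (0:ℝ) < (m:ℝ) * n := by positivity
        exact mul_pos hmn hd
      have hSlt : (m:ℝ) * A ^ 2 + n * B ^ 2 < 1 / t := by
        rw [lt_div_iff₀ ht]
        nlinarith [e2, hmnd', sub_pos.2 ht1, hS0]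
      have hbaselt : ((m:ℝ) * A ^ 2 + (n:ℝ) * B ^ 2) / t < (1 / t) / t := by gcongr
      have hmonolt : (((m:ℝ) * A ^ 2 + (n:ℝ) * B ^ 2) / t) ^ (m + n)
          < ((1 / t) / t) ^ (m + n) := pow_lt_pow_left₀ hbaselt (by positivity) hk0
      have : (A ^ m * B ^ n) ^ 2 < ((1 / t) ^ m * (1 / t) ^ n) ^ 2 := by
        rw [hZsq, hcsq]; exact hamle.trans_lt hmonolt
      rw [heq] at this; linarith
    rw [← hPQ] at htrace
    have hPv : P = 1 / t := by
      rw [eq_div_iff ht.ne', ht_def]; linear_combination htrace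
    have e2' := e2
    rw [hPQ, ← hAB] at e2'
    have hA2 : A ^ 2 = (1 / t) ^ 2 := by
      have h9 : ((1:ℝ) / t) ^ 2 * (t * t * (t - 1)) = t - 1 := by field_simp
      refine mul_right_cancel₀ (b := t * t * (t - 1))
        (ne_of_gt (mul_pos (mul_pos ht ht) (sub_pos.2 ht1))) ?_
      rw [h9, ht_def] at *
      rw [ht_def] at e2'
      linear_combination e2'
    have hAv : A = 1 / t := by
      rcases sq_eq_sq_iff_eq_or_eq_neg.mp hA2 with h | h
      · exact h
      · exfalso; rw [h] at hApos
        have : (0:ℝ) < 1 / t := by positivity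
        linarith
    exact ⟨hAv, hAB ▸ hAv, hPv, hPQ ▸ hPv⟩
  · rintro ⟨h1, h2, -, -⟩
    rw [h1, h2]
end

section
/- Let m, n > 1 be integers. At the fixed point F* where P = Q = 1/(m+n) and the constraints mP + nQ = 1, mP² + nQ² + (m+n−1)(mA² + nB²) = 1 hold with A, B > 0, the third derivative of Z = A^m B^n along the flow equals −2Z(m+n)(m+n−1)²[m(A² − 1/(m+n)²)² + n(B² − 1/(m+n)²)²]; in particular Z''' ≤ 0 with equality iff A = B = 1/(m+n). -/
noncomputable section ZfAux

def Sf (m n : ℕ) (P Q : ℝ → ℝ) (t : ℝ) : ℝ := (m : ℝ) * P t ^ 2 + (n : ℝ) * Q t ^ 2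

def dAf (m n : ℕ) (A P Q : ℝ → ℝ) (t : ℝ) : ℝ := A t * (P t - Sf m n P Q t)

def dBf (m n : ℕ) (B P Q : ℝ → ℝ) (t : ℝ) : ℝ := B t * (Q t - Sf m n P Q t)

def dPf (m n : ℕ) (A P Q : ℝ → ℝ) (t : ℝ) : ℝ :=
  P t * (1 - Sf m n P Q t) - ((m : ℝ) + n - 1) * A t ^ 2

def dQf (m n : ℕ) (B P Q : ℝ → ℝ) (t : ℝ) : ℝ :=
  Q t * (1 - Sf m n P Q t) - ((m : ℝ) + n - 1) * B t ^ 2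

def dSf (m n : ℕ) (A B P Q : ℝ → ℝ) (t : ℝ) : ℝ :=
  (m : ℝ) * (2 * P t * dPf m n A P Q t) + (n : ℝ) * (2 * Q t * dQf m n B P Q t)

def Wf (m n : ℕ) (P Q : ℝ → ℝ) (t : ℝ) : ℝ := 1 - ((m : ℝ) + n) * Sf m n P Q t

def dWf (m n : ℕ) (A B P Q : ℝ → ℝ) (t : ℝ) : ℝ := -(((m : ℝ) + n) * dSf m n A B P Q t)

def d2Pf (m n : ℕ) (A B P Q : ℝ → ℝ) (t : ℝ) : ℝ :=
  dPf m n A P Q t * (1 - Sf m n P Q t) + P t * (-(dSf m n A B P Q t))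
    - ((m : ℝ) + n - 1) * (2 * A t * dAf m n A P Q t)

def d2Qf (m n : ℕ) (A B P Q : ℝ → ℝ) (t : ℝ) : ℝ :=
  dQf m n B P Q t * (1 - Sf m n P Q t) + Q t * (-(dSf m n A B P Q t))
    - ((m : ℝ) + n - 1) * (2 * B t * dBf m n B P Q t)

def d2Sf (m n : ℕ) (A B P Q : ℝ → ℝ) (t : ℝ) : ℝ :=
  (m : ℝ) * (2 * dPf m n A P Q t * dPf m n A P Q t + 2 * P t * d2Pf m n A B P Q t)
    + (n : ℝ) * (2 * dQf m n B P Q t * dQf m n B P Q t + 2 * Q t * d2Qf m n A B P Q t)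

end ZfAux

lemma hasDerivAt_congr_deriv {f : ℝ → ℝ} {a b x : ℝ} (h : HasDerivAt f a x) (hab : a = b) :
    HasDerivAt f b x := hab ▸ h

set_option maxHeartbeats 1600000 in
/-- At points of the flow where `P = Q = 1/(m+n)` and the constraints hold, the third
derivative of `Z = A^m B^n` along the flow equals
`-2 Z (m+n)(m+n-1)² [m(A² - 1/(m+n)²)² + n(B² - 1/(m+n)²)²]`; in particular `Z''' ≤ 0`,
with equality iff `A = B = 1/(m+n)`. -/
theorem Z_third_derivative_at_Fstar (m n : ℕ) (hm : 1 < m) (hn : 1 < n)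
    (A B P Q : ℝ → ℝ)
    (hA : ∀ τ, HasDerivAt A (A τ * (P τ - ((m : ℝ) * (P τ) ^ 2 + n * (Q τ) ^ 2))) τ)
    (hB : ∀ τ, HasDerivAt B (B τ * (Q τ - ((m : ℝ) * (P τ) ^ 2 + n * (Q τ) ^ 2))) τ)
    (hP : ∀ τ, HasDerivAt P (P τ * (1 - ((m : ℝ) * (P τ) ^ 2 + n * (Q τ) ^ 2))
      - ((m : ℝ) + n - 1) * (A τ) ^ 2) τ)
    (hQ : ∀ τ, HasDerivAt Q (Q τ * (1 - ((m : ℝ) * (P τ) ^ 2 + n * (Q τ) ^ 2))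
      - ((m : ℝ) + n - 1) * (B τ) ^ 2) τ)
    (htrace : ∀ τ, (m : ℝ) * P τ + n * Q τ = 1)
    (hham : ∀ τ, (m : ℝ) * (P τ) ^ 2 + n * (Q τ) ^ 2
      + ((m : ℝ) + n - 1) * ((m : ℝ) * (A τ) ^ 2 + n * (B τ) ^ 2) = 1)
    (hApos : ∀ τ, 0 < A τ) (hBpos : ∀ τ, 0 < B τ)
    (τ₀ : ℝ) (hP0 : P τ₀ = 1 / ((m : ℝ) + n)) (hQ0 : Q τ₀ = 1 / ((m : ℝ) + n)) :
    iteratedDeriv 3 (fun t => A t ^ m * B t ^ n) τ₀ =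
      -2 * (A τ₀ ^ m * B τ₀ ^ n) * ((m : ℝ) + n) * ((m : ℝ) + n - 1) ^ 2 *
        ((m : ℝ) * ((A τ₀) ^ 2 - (1 / ((m : ℝ) + n)) ^ 2) ^ 2
          + (n : ℝ) * ((B τ₀) ^ 2 - (1 / ((m : ℝ) + n)) ^ 2) ^ 2) ∧
    iteratedDeriv 3 (fun t => A t ^ m * B t ^ n) τ₀ ≤ 0 ∧
    (iteratedDeriv 3 (fun t => A t ^ m * B t ^ n) τ₀ = 0 ↔
      A τ₀ = 1 / ((m : ℝ) + n) ∧ B τ₀ = 1 / ((m : ℝ) + n)) := by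
  have hm1 : (1 : ℝ) < (m : ℝ) := by exact_mod_cast hm
  have hn1 : (1 : ℝ) < (n : ℝ) := by exact_mod_cast hn
  have hMN : (0 : ℝ) < (m : ℝ) + n := by linarith
  have hMNne : ((m : ℝ) + n) ≠ 0 := ne_of_gt hMN
  have hKpos : (0 : ℝ) < (m : ℝ) + n - 1 := by linarith
  have hKne : ((m : ℝ) + n - 1) ≠ 0 := ne_of_gt hKpos
  have hA' : ∀ t, HasDerivAt A (dAf m n A P Q t) t := hA
  have hB' : ∀ t, HasDerivAt B (dBf m n B P Q t) t := hB
  have hP' : ∀ t, HasDerivAt P (dPf m n A P Q t) t := hP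
  have hQ' : ∀ t, HasDerivAt Q (dQf m n B P Q t) t := hQ
  -- derivative of S
  have hS : ∀ t, HasDerivAt (Sf m n P Q) (dSf m n A B P Q t) t := by
    intro t
    have h3 := (((hP' t).pow 2).const_mul (m : ℝ)).add (((hQ' t).pow 2).const_mul (n : ℝ))
    exact hasDerivAt_congr_deriv h3 (by simp only [dSf]; push_cast; ring)
  -- derivative of W
  have hW : ∀ t, HasDerivAt (Wf m n P Q) (dWf m n A B P Q t) t := fun t =>
    ((hS t).const_mul ((m : ℝ) + n)).const_sub 1
  -- derivative of Z
  have hZ : ∀ t, HasDerivAt (fun u => A u ^ m * B u ^ n)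
      (A t ^ m * B t ^ n * Wf m n P Q t) t := by
    intro t
    have h3 := ((hA' t).pow m).mul ((hB' t).pow n)
    apply hasDerivAt_congr_deriv h3
    have e1 : A t ^ (m - 1) * A t = A t ^ m := by
      rw [← pow_succ]; congr 1; omega
    have e2 : B t ^ (n - 1) * B t = B t ^ n := by
      rw [← pow_succ]; congr 1; omega
    have e3 := htrace t
    simp only [Wf, Sf, dAf, dBf, Pi.pow_apply]
    linear_combination ((m : ℝ) * (P t - ((m : ℝ) * P t ^ 2 + (n : ℝ) * Q t ^ 2)) * B t ^ n) * e1
      + ((n : ℝ) * (Q t - ((m : ℝ) * P t ^ 2 + (n : ℝ) * Q t ^ 2)) * A t ^ m) * e2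
      + (A t ^ m * B t ^ n) * e3
  -- second-level derivatives
  have hdP : ∀ t, HasDerivAt (dPf m n A P Q) (d2Pf m n A B P Q t) t := by
    intro t
    have h3 := ((hP' t).mul ((hS t).const_sub 1)).sub
      (((hA' t).pow 2).const_mul ((m : ℝ) + n - 1))
    exact hasDerivAt_congr_deriv h3 (by simp only [d2Pf]; push_cast; ring)
  have hdQ : ∀ t, HasDerivAt (dQf m n B P Q) (d2Qf m n A B P Q t) t := by
    intro t
    have h3 := ((hQ' t).mul ((hS t).const_sub 1)).sub
      (((hB' t).pow 2).const_mul ((m : ℝ) + n - 1))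
    exact hasDerivAt_congr_deriv h3 (by simp only [d2Qf]; push_cast; ring)
  have hdS : ∀ t, HasDerivAt (dSf m n A B P Q) (d2Sf m n A B P Q t) t := by
    intro t
    have h3 := ((((hP' t).const_mul (2 : ℝ)).mul (hdP t)).const_mul (m : ℝ)).add
      ((((hQ' t).const_mul (2 : ℝ)).mul (hdQ t)).const_mul (n : ℝ))
    exact hasDerivAt_congr_deriv h3 (by simp only [d2Sf])
  have hdW : ∀ t, HasDerivAt (dWf m n A B P Q) (-(((m : ℝ) + n) * d2Sf m n A B P Q t)) t :=
    fun t => ((hdS t).const_mul ((m : ℝ) + n)).neg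
  -- the chain of derivatives of Z
  have hZ1 : ∀ t, HasDerivAt (fun u => A u ^ m * B u ^ n * Wf m n P Q u)
      (A t ^ m * B t ^ n * Wf m n P Q t * Wf m n P Q t
        + A t ^ m * B t ^ n * dWf m n A B P Q t) t := fun t => (hZ t).mul (hW t)
  have hZ2 : ∀ t, HasDerivAt (fun u => A u ^ m * B u ^ n * Wf m n P Q u * Wf m n P Q u
        + A u ^ m * B u ^ n * dWf m n A B P Q u)
      ((A t ^ m * B t ^ n * Wf m n P Q t * Wf m n P Q t
          + A t ^ m * B t ^ n * dWf m n A B P Q t) * Wf m n P Q t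
        + A t ^ m * B t ^ n * Wf m n P Q t * dWf m n A B P Q t
        + (A t ^ m * B t ^ n * Wf m n P Q t * dWf m n A B P Q t
          + A t ^ m * B t ^ n * (-(((m : ℝ) + n) * d2Sf m n A B P Q t)))) t :=
    fun t => (((hZ t).mul (hW t)).mul (hW t)).add ((hZ t).mul (hdW t))
  -- express the third iterated derivative
  have e1 : deriv (fun u => A u ^ m * B u ^ n)
      = fun t => A t ^ m * B t ^ n * Wf m n P Q t := funext fun t => (hZ t).deriv
  have e2 : deriv (fun t => A t ^ m * B t ^ n * Wf m n P Q t)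
      = fun t => A t ^ m * B t ^ n * Wf m n P Q t * Wf m n P Q t
        + A t ^ m * B t ^ n * dWf m n A B P Q t := funext fun t => (hZ1 t).deriv
  have key : iteratedDeriv 3 (fun t => A t ^ m * B t ^ n) τ₀
      = (A τ₀ ^ m * B τ₀ ^ n * Wf m n P Q τ₀ * Wf m n P Q τ₀
          + A τ₀ ^ m * B τ₀ ^ n * dWf m n A B P Q τ₀) * Wf m n P Q τ₀
        + A τ₀ ^ m * B τ₀ ^ n * Wf m n P Q τ₀ * dWf m n A B P Q τ₀
        + (A τ₀ ^ m * B τ₀ ^ n * Wf m n P Q τ₀ * dWf m n A B P Q τ₀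
          + A τ₀ ^ m * B τ₀ ^ n * (-(((m : ℝ) + n) * d2Sf m n A B P Q τ₀))) := by
    rw [show (3 : ℕ) = 2 + 1 from rfl, iteratedDeriv_succ,
      show (2 : ℕ) = 1 + 1 from rfl, iteratedDeriv_succ, iteratedDeriv_one, e1, e2]
    exact (hZ2 τ₀).deriv
  -- values at τ₀
  have hS0 : Sf m n P Q τ₀ = 1 / ((m : ℝ) + n) := by
    simp only [Sf, hP0, hQ0]; field_simp
  have hW0 : Wf m n P Q τ₀ = 0 := by
    simp only [Wf, hS0]; field_simp; ring
  have hT' : ((m : ℝ) + n) * ((m : ℝ) * A τ₀ ^ 2 + (n : ℝ) * B τ₀ ^ 2) = 1 := by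
    have h := hham τ₀
    have hS1 : ((m : ℝ) + n) * ((m : ℝ) * P τ₀ ^ 2 + (n : ℝ) * Q τ₀ ^ 2) = 1 := by
      rw [hP0, hQ0]; field_simp
    have h2 : ((m : ℝ) + n - 1) * (((m : ℝ) + n) * ((m : ℝ) * A τ₀ ^ 2 + (n : ℝ) * B τ₀ ^ 2) - 1)
        = 0 := by linear_combination ((m : ℝ) + n) * h - hS1
    rcases mul_eq_zero.mp h2 with h3 | h3
    · exact absurd h3 hKne
    · linarith
  have hc1 : ((m : ℝ) + n) * (1 / ((m : ℝ) + n)) = 1 := by field_simp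
  have hdPval : dPf m n A P Q τ₀
      = ((m : ℝ) + n - 1) * ((1 / ((m : ℝ) + n)) ^ 2 - A τ₀ ^ 2) := by
    simp only [dPf, hS0, hP0]
    linear_combination (-(1 / ((m : ℝ) + n))) * hc1
  have hdQval : dQf m n B P Q τ₀
      = ((m : ℝ) + n - 1) * ((1 / ((m : ℝ) + n)) ^ 2 - B τ₀ ^ 2) := by
    simp only [dQf, hS0, hQ0]
    linear_combination (-(1 / ((m : ℝ) + n))) * hc1
  have hdA0 : dAf m n A P Q τ₀ = 0 := by simp [dAf, hS0, hP0]
  have hdB0 : dBf m n B P Q τ₀ = 0 := by simp [dBf, hS0, hQ0]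
  have hmdP : (m : ℝ) * dPf m n A P Q τ₀ + (n : ℝ) * dQf m n B P Q τ₀ = 0 := by
    rw [hdPval, hdQval]
    linear_combination (((m : ℝ) + n - 1) * (1 / ((m : ℝ) + n))
        + ((m : ℝ) + n - 1) * ((m : ℝ) * A τ₀ ^ 2 + (n : ℝ) * B τ₀ ^ 2)) * hc1
      - (((m : ℝ) + n - 1) * (1 / ((m : ℝ) + n))) * hT'
  have hdS0 : dSf m n A B P Q τ₀ = 0 := by
    simp only [dSf, hP0, hQ0]
    linear_combination (2 * (1 / ((m : ℝ) + n))) * hmdP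
  have hdW0 : dWf m n A B P Q τ₀ = 0 := by simp [dWf, hdS0]
  have hd2Pval : d2Pf m n A B P Q τ₀
      = dPf m n A P Q τ₀ * (1 - 1 / ((m : ℝ) + n)) := by
    simp [d2Pf, hdS0, hdA0, hS0]
  have hd2Qval : d2Qf m n A B P Q τ₀
      = dQf m n B P Q τ₀ * (1 - 1 / ((m : ℝ) + n)) := by
    simp [d2Qf, hdS0, hdB0, hS0]
  have hd2Sval : d2Sf m n A B P Q τ₀
      = 2 * ((m : ℝ) + n - 1) ^ 2 * ((m : ℝ) * (A τ₀ ^ 2 - (1 / ((m : ℝ) + n)) ^ 2) ^ 2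
          + (n : ℝ) * (B τ₀ ^ 2 - (1 / ((m : ℝ) + n)) ^ 2) ^ 2) := by
    simp only [d2Sf, hP0, hQ0, hd2Pval, hd2Qval, hdPval, hdQval]
    linear_combination
      (2 * (1 / ((m : ℝ) + n)) * (1 - 1 / ((m : ℝ) + n)) * ((m : ℝ) + n - 1)
          * ((1 / ((m : ℝ) + n)) + ((m : ℝ) * A τ₀ ^ 2 + (n : ℝ) * B τ₀ ^ 2))) * hc1
      - (2 * (1 / ((m : ℝ) + n)) * (1 - 1 / ((m : ℝ) + n)) * ((m : ℝ) + n - 1)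
          * (1 / ((m : ℝ) + n))) * hT'
  have keyval : iteratedDeriv 3 (fun t => A t ^ m * B t ^ n) τ₀ =
      -2 * (A τ₀ ^ m * B τ₀ ^ n) * ((m : ℝ) + n) * ((m : ℝ) + n - 1) ^ 2 *
        ((m : ℝ) * ((A τ₀) ^ 2 - (1 / ((m : ℝ) + n)) ^ 2) ^ 2
          + (n : ℝ) * ((B τ₀) ^ 2 - (1 / ((m : ℝ) + n)) ^ 2) ^ 2) := by
    rw [key, hW0, hdW0, hd2Sval]; ring
  have hApos0 := hApos τ₀
  have hBpos0 := hBpos τ₀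
  have hZpos : 0 < A τ₀ ^ m * B τ₀ ^ n := by positivity
  have hupos : 0 < 1 / ((m : ℝ) + n) := by positivity
  have hfac : 0 < 2 * (A τ₀ ^ m * B τ₀ ^ n) * ((m : ℝ) + n) * ((m : ℝ) + n - 1) ^ 2 := by
    positivity
  have hSOSnn : 0 ≤ (m : ℝ) * ((A τ₀) ^ 2 - (1 / ((m : ℝ) + n)) ^ 2) ^ 2
      + (n : ℝ) * ((B τ₀) ^ 2 - (1 / ((m : ℝ) + n)) ^ 2) ^ 2 := by positivity
  have hrew : -2 * (A τ₀ ^ m * B τ₀ ^ n) * ((m : ℝ) + n) * ((m : ℝ) + n - 1) ^ 2 *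
        ((m : ℝ) * ((A τ₀) ^ 2 - (1 / ((m : ℝ) + n)) ^ 2) ^ 2
          + (n : ℝ) * ((B τ₀) ^ 2 - (1 / ((m : ℝ) + n)) ^ 2) ^ 2)
      = -((2 * (A τ₀ ^ m * B τ₀ ^ n) * ((m : ℝ) + n) * ((m : ℝ) + n - 1) ^ 2) *
        ((m : ℝ) * ((A τ₀) ^ 2 - (1 / ((m : ℝ) + n)) ^ 2) ^ 2
          + (n : ℝ) * ((B τ₀) ^ 2 - (1 / ((m : ℝ) + n)) ^ 2) ^ 2)) := by ring
  refine ⟨keyval, ?_, ?_⟩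
  · rw [keyval, hrew]
    exact neg_nonpos.mpr (mul_nonneg hfac.le hSOSnn)
  · rw [keyval, hrew]
    constructor
    · intro h
      have h0 : (2 * (A τ₀ ^ m * B τ₀ ^ n) * ((m : ℝ) + n) * ((m : ℝ) + n - 1) ^ 2) *
          ((m : ℝ) * ((A τ₀) ^ 2 - (1 / ((m : ℝ) + n)) ^ 2) ^ 2
            + (n : ℝ) * ((B τ₀) ^ 2 - (1 / ((m : ℝ) + n)) ^ 2) ^ 2) = 0 :=
        neg_eq_zero.mp h
      have hS' := (mul_eq_zero.mp h0).resolve_left (ne_of_gt hfac)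
      have hx := sq_nonneg (A τ₀ ^ 2 - (1 / ((m : ℝ) + n)) ^ 2)
      have hy := sq_nonneg (B τ₀ ^ 2 - (1 / ((m : ℝ) + n)) ^ 2)
      have hmx : (m : ℝ) * ((A τ₀) ^ 2 - (1 / ((m : ℝ) + n)) ^ 2) ^ 2 = 0 := by
        have h1 : 0 ≤ (m : ℝ) * ((A τ₀) ^ 2 - (1 / ((m : ℝ) + n)) ^ 2) ^ 2 :=
          mul_nonneg (by linarith) hx
        have h2 : 0 ≤ (n : ℝ) * ((B τ₀) ^ 2 - (1 / ((m : ℝ) + n)) ^ 2) ^ 2 :=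
          mul_nonneg (by linarith) hy
        linarith
      have hny : (n : ℝ) * ((B τ₀) ^ 2 - (1 / ((m : ℝ) + n)) ^ 2) ^ 2 = 0 := by
        have h1 : 0 ≤ (m : ℝ) * ((A τ₀) ^ 2 - (1 / ((m : ℝ) + n)) ^ 2) ^ 2 :=
          mul_nonneg (by linarith) hx
        have h2 : 0 ≤ (n : ℝ) * ((B τ₀) ^ 2 - (1 / ((m : ℝ) + n)) ^ 2) ^ 2 :=
          mul_nonneg (by linarith) hy
        linarith
      have ha2 : ((A τ₀) ^ 2 - (1 / ((m : ℝ) + n)) ^ 2) ^ 2 = 0 :=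
        (mul_eq_zero.mp hmx).resolve_left (by positivity)
      have hb2 : ((B τ₀) ^ 2 - (1 / ((m : ℝ) + n)) ^ 2) ^ 2 = 0 :=
        (mul_eq_zero.mp hny).resolve_left (by positivity)
      have ha2' : (A τ₀) ^ 2 - (1 / ((m : ℝ) + n)) ^ 2 = 0 :=
        pow_eq_zero_iff two_ne_zero |>.mp ha2
      have hb2' : (B τ₀) ^ 2 - (1 / ((m : ℝ) + n)) ^ 2 = 0 :=
        pow_eq_zero_iff two_ne_zero |>.mp hb2
      constructor
      · have hfa : (A τ₀ - 1 / ((m : ℝ) + n)) * (A τ₀ + 1 / ((m : ℝ) + n)) = 0 := by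
          linear_combination ha2'
        rcases mul_eq_zero.mp hfa with h' | h'
        · linarith
        · exfalso; linarith
      · have hfb : (B τ₀ - 1 / ((m : ℝ) + n)) * (B τ₀ + 1 / ((m : ℝ) + n)) = 0 := by
          linear_combination hb2'
        rcases mul_eq_zero.mp hfb with h' | h'
        · linarith
        · exfalso; linarith
    · rintro ⟨ha, hb⟩
      rw [ha, hb]; ring
end

section
/- Let m, n > 1 be integers. On the boundary B = 0 of the constraint set with k_g = −1 (so mP + nQ = 1 and mP² + nQ² + (m+n−1)mA² = 1), the acceleration expression −(1−P)² + (m+n−1)(m−1)A² equals −(m/n)(m+n−1)(P − 1/m)² up to a positive factor; in particular it is ≤ 0, with equality exactly at P = 1/m. -/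
/-- On the boundary `B = 0` of the constraint set (with `k_g = -1`), the acceleration
expression equals `-(m/n)(m+n-1)(P - 1/m)²`; in particular it is `≤ 0`, vanishing
exactly at `P = 1/m`. -/
theorem acceleration_on_B_boundary (m n : ℕ) (hm : 1 < m) (hn : 1 < n)
    (P Q A : ℝ)
    (htrace : (m : ℝ) * P + n * Q = 1)
    (hham : (m : ℝ) * P ^ 2 + n * Q ^ 2 + ((m : ℝ) + n - 1) * ((m : ℝ) * A ^ 2) = 1) :
    -(1 - P) ^ 2 + ((m : ℝ) + n - 1) * (((m : ℝ) - 1) * A ^ 2)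
      = -((m : ℝ) / n) * ((m : ℝ) + n - 1) * (P - 1 / (m : ℝ)) ^ 2 ∧
    -(1 - P) ^ 2 + ((m : ℝ) + n - 1) * (((m : ℝ) - 1) * A ^ 2) ≤ 0 ∧
    (-(1 - P) ^ 2 + ((m : ℝ) + n - 1) * (((m : ℝ) - 1) * A ^ 2) = 0 ↔ P = 1 / (m : ℝ)) := by
  have hm1 : (1:ℝ) < m := by exact_mod_cast hm
  have hn1 : (1:ℝ) < n := by exact_mod_cast hn
  have hm0 : (0:ℝ) < m := by linarith
  have hn0 : (0:ℝ) < n := by linarith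
  have hm0' : (m:ℝ) ≠ 0 := ne_of_gt hm0
  have hn0' : (n:ℝ) ≠ 0 := ne_of_gt hn0
  have heq : -(1 - P) ^ 2 + ((m : ℝ) + n - 1) * (((m : ℝ) - 1) * A ^ 2)
      = -((m : ℝ) / n) * ((m : ℝ) + n - 1) * (P - 1 / (m : ℝ)) ^ 2 := by
    field_simp
    linear_combination ((n:ℝ)*((m:ℝ)-1)) * hham +
      (-((m:ℝ)-1)*((n:ℝ)*Q + 1 - m*P)) * htrace
  have hfac : (0:ℝ) < ((m : ℝ) / n) * ((m : ℝ) + n - 1) := by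
    apply mul_pos (div_pos hm0 hn0)
    nlinarith
  refine ⟨heq, ?_, ?_⟩
  · rw [heq]
    nlinarith [sq_nonneg (P - 1 / (m:ℝ)), hfac]
  · rw [heq]
    constructor
    · intro h
      have hsq : (P - 1 / (m:ℝ)) ^ 2 = 0 := by
        nlinarith [sq_nonneg (P - 1 / (m:ℝ)), hfac]
      have := pow_eq_zero_iff (n := 2) (by norm_num) |>.mp hsq
      linarith [sub_eq_zero.mp this]
    · intro h
      rw [h]
      ring
end
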